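/- There exist injective maps f, g : ℤ → ℤ such that f has exactly one cycle, which is a forward cycle; g is a bijection with exactly one cycle, which is an open cycle; and h = g∘f (f applied first) has exactly one forward cycle and no other cycles. Concretely, with f(i) = -i for i > 0 and f(i) = -i+1 for i ≤ 0, and g(i) = i+1, the composite h satisfies h(i) = -i+1 for i > 0 and h(i) = -i+2 for i ≤ 0, and both f and h have a single forward cycle equal to all of ℤ, while g's single cycle ℤ is open. -/

import Mathlib

private lemma closed_eq_univ {m : ℤ → ℤ} {a : ℤ}
    (hs : ∀ z : ℤ, ∃ n : ℕ, m^[n] a = z) {T : Set ℤ}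
    (hne : T.Nonempty) (hc : ∀ γ, m γ ∈ T ↔ γ ∈ T) : T = Set.univ := by
  have key : ∀ n : ℕ, (m^[n] a ∈ T ↔ a ∈ T) := by
    intro n; induction n with
    | zero => simp
    | succ n ih => rw [Function.iterate_succ_apply', hc]; exact ih
  obtain ⟨z, hz⟩ := hne
  obtain ⟨n, hn⟩ := hs z
  have ha : a ∈ T := (key n).mp (hn ▸ hz)
  ext w
  simp only [Set.mem_univ, iff_true]
  obtain ⟨n, hn⟩ := hs w
  exact hn ▸ (key n).mpr ha

private def fdef : ℤ → ℤ := fun i => if 0 < i then -i else -i + 1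

private lemma f_orbit : ∀ k : ℕ, fdef^[2*k] 0 = -(k:ℤ) ∧ fdef^[2*k+1] 0 = (k:ℤ)+1 := by
  intro k
  induction k with
  | zero => constructor <;> simp [fdef]
  | succ k ih =>
    obtain ⟨h1, h2⟩ := ih
    have e1 : fdef^[2*(k+1)] 0 = fdef (fdef^[2*k+1] 0) := by
      rw [show 2*(k+1) = (2*k+1)+1 by ring, Function.iterate_succ_apply']
    have e2 : fdef^[2*(k+1)+1] 0 = fdef (fdef^[2*(k+1)] 0) := by
      rw [Function.iterate_succ_apply']
    rw [e1, h2]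
    have hv : fdef ((k:ℤ)+1) = -((k:ℤ)+1) := by
      simp only [fdef]; rw [if_pos (by positivity)]
    constructor
    · rw [hv]; push_cast; ring
    · rw [e2, e1, h2, hv]
      simp only [fdef]
      rw [if_neg (by omega)]
      push_cast; ring

private lemma f_surj : ∀ z : ℤ, ∃ n : ℕ, fdef^[n] 0 = z := by
  intro z
  rcases le_or_gt z 0 with h | h
  · exact ⟨2 * (-z).toNat, by rw [(f_orbit _).1]; omega⟩
  · exact ⟨2 * (z-1).toNat + 1, by rw [(f_orbit _).2]; omega⟩

private def hdef : ℤ → ℤ := fun i => if 0 < i then -i + 1 else -i + 2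

private lemma h_orbit : ∀ k : ℕ, hdef^[2*k+1] 1 = -(k:ℤ) ∧ hdef^[2*k+2] 1 = (k:ℤ)+2 := by
  intro k
  induction k with
  | zero =>
    constructor
    · simp [hdef]
    · rw [show 2*0+2 = 1+1 by ring, Function.iterate_succ_apply']
      norm_num [hdef]
  | succ k ih =>
    obtain ⟨h1, h2⟩ := ih
    have e1 : hdef^[2*(k+1)+1] 1 = hdef (hdef^[2*k+2] 1) := by
      rw [show 2*(k+1)+1 = (2*k+2)+1 by ring, Function.iterate_succ_apply']
    have e2 : hdef^[2*(k+1)+2] 1 = hdef (hdef^[2*(k+1)+1] 1) := by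
      rw [Function.iterate_succ_apply']
    rw [e1, h2]
    have hv : hdef ((k:ℤ)+2) = -((k:ℤ)+1) := by
      simp only [hdef]; rw [if_pos (by positivity)]; ring
    constructor
    · rw [hv]; push_cast; ring
    · rw [e2, e1, h2, hv]
      simp only [hdef]
      rw [if_neg (by omega)]
      push_cast; ring

private lemma h_surj : ∀ z : ℤ, ∃ n : ℕ, hdef^[n] 1 = z := by
  intro z
  rcases le_or_gt z 0 with h | h
  · exact ⟨2 * (-z).toNat + 1, by rw [(h_orbit _).1]; omega⟩
  · rcases eq_or_lt_of_le (show (1:ℤ) ≤ z by omega) with h1 | h1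
    · exact ⟨0, by simpa using h1⟩
    · exact ⟨2 * (z-2).toNat + 2, by rw [(h_orbit _).2]; omega⟩
universe u

def IsCycle {Ω : Type u} (f : Ω → Ω) (S : Set Ω) : Prop :=
  S.Nonempty ∧ (∀ γ, f γ ∈ S ↔ γ ∈ S) ∧
    ∀ T, T ⊆ S → T.Nonempty → (∀ γ, f γ ∈ T ↔ γ ∈ T) → T = S

def IsForwardCycle {Ω : Type u} (f : Ω → Ω) (S : Set Ω) : Prop :=
  IsCycle f S ∧ S.Infinite ∧ ∃ α ∈ S, α ∉ Set.range f

def IsOpenCycle {Ω : Type u} (f : Ω → Ω) (S : Set Ω) : Prop :=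
  IsCycle f S ∧ S.Infinite ∧ ¬ IsForwardCycle f S

theorem stmt_17 :
    ∃ f g : ℤ → ℤ, Function.Injective f ∧ Function.Bijective g ∧
      (∀ i : ℤ, f i = if 0 < i then -i else -i + 1) ∧
      (∀ i : ℤ, g i = i + 1) ∧
      (∀ i : ℤ, (g ∘ f) i = if 0 < i then -i + 1 else -i + 2) ∧
      (IsForwardCycle f Set.univ ∧ ∀ S, IsCycle f S → S = Set.univ) ∧
      (IsOpenCycle g Set.univ ∧ ∀ S, IsCycle g S → S = Set.univ) ∧
      (IsForwardCycle (g ∘ f) Set.univ ∧ ∀ S, IsCycle (g ∘ f) S → S = Set.univ) := by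
  refine ⟨fdef, fun i => i + 1, ?_, ?_, fun i => rfl, fun i => rfl, ?_, ?_, ?_, ?_⟩
  · intro a b hab
    simp only [fdef] at hab
    split_ifs at hab <;> omega
  · constructor
    · intro a b hab; simp only at hab; omega
    · intro z; exact ⟨z - 1, by show z - 1 + 1 = z; ring⟩
  · intro i
    simp only [Function.comp, fdef]
    split_ifs <;> ring
  -- f
  · have hcyc : IsCycle fdef Set.univ := by
      refine ⟨⟨0, trivial⟩, fun γ => by simp, fun T hT hne hc => ?_⟩
      exact closed_eq_univ f_surj hne hc
    refine ⟨⟨hcyc, Set.infinite_univ, 0, trivial, ?_⟩, fun S hS => ?_⟩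
    · rintro ⟨i, hi⟩
      simp only [fdef] at hi
      split_ifs at hi <;> omega
    · exact closed_eq_univ f_surj hS.1 hS.2.1
  -- g
  · have hclosed : ∀ T : Set ℤ, T.Nonempty → (∀ γ : ℤ, γ + 1 ∈ T ↔ γ ∈ T) →
        T = Set.univ := by
      intro T hne hc
      obtain ⟨a, ha⟩ := hne
      have key : ∀ z : ℤ, z ∈ T ↔ (0:ℤ) ∈ T := by
        intro z
        induction z using Int.induction_on with
        | zero => rfl
        | succ n ih => rw [hc]; exact ih
        | pred n ih => rw [← ih, ← hc]; norm_num
      have h0 : (0:ℤ) ∈ T := (key a).mp ha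
      ext w; simp only [Set.mem_univ, iff_true]
      exact (key w).mpr h0
    have hcyc : IsCycle (fun i : ℤ => i + 1) Set.univ := by
      refine ⟨⟨0, trivial⟩, fun γ => by simp, fun T hT hne hc => hclosed T hne hc⟩
    refine ⟨⟨hcyc, Set.infinite_univ, ?_⟩, fun S hS => hclosed S hS.1 hS.2.1⟩
    rintro ⟨_, _, α, _, hα⟩
    exact hα ⟨α - 1, by ring⟩
  -- h
  · have heq : ((fun i : ℤ => i + 1) ∘ fdef) = hdef := by
      funext i
      simp only [Function.comp, fdef, hdef]
      split_ifs <;> ring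
    rw [heq]
    have hcyc : IsCycle hdef Set.univ := by
      refine ⟨⟨0, trivial⟩, fun γ => by simp, fun T hT hne hc => ?_⟩
      exact closed_eq_univ h_surj hne hc
    refine ⟨⟨hcyc, Set.infinite_univ, 1, trivial, ?_⟩, fun S hS => ?_⟩
    · rintro ⟨i, hi⟩
      simp only [hdef] at hi
      split_ifs at hi <;> omega
    · exact closed_eq_univ h_surj hS.1 hS.2.1
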